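/- Suppose 1 < α ≤ 2 and f ∈ C^α[0,1] (f is differentiable and f' is (α−1)-Hölder on [0,1]). Then there exists a closed set A ⊆ [0,1] with dim_H A ≥ α − 1 such that f restricted to A is convex or concave. -/

import Mathlib

open Set MeasureTheory
open scoped ENNReal NNReal

/-- Main auxiliary lemma: if `f' u < f' v` for some `u < v` in `[0,1]`, then there is a closed
set `A ⊆ [0,1]` of Hausdorff dimension at least `α - 1` on which `f` is convex. The set `A`
consists of points that are global minima on `[u,v]` of `t ↦ f t - a • t` for some slope `a`;
every slope `a ∈ (f' u, f' v)` is attained as `f' x` for such a point, so `f' '' A` contains an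
interval, and since `f'` is `(α-1)`-Hölder, `dimH A ≥ α - 1`. -/
theorem holder_aux_min (α L : ℝ) (hα1 : 1 < α)
    (f f' : ℝ → ℝ)
    (hderiv : ∀ x ∈ Icc (0:ℝ) 1, HasDerivWithinAt f (f' x) (Icc 0 1) x)
    (hHolder : ∀ x ∈ Icc (0:ℝ) 1, ∀ y ∈ Icc (0:ℝ) 1,
      |f' x - f' y| ≤ L * |x - y| ^ (α - 1))
    (u v : ℝ) (hu : u ∈ Icc (0:ℝ) 1) (hv : v ∈ Icc (0:ℝ) 1) (huv : u < v)
    (hfuv : f' u < f' v) :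
    ∃ A ⊆ Icc (0:ℝ) 1, IsClosed A ∧ ENNReal.ofReal (α - 1) ≤ dimH A ∧
      ∀ x₁ ∈ A, ∀ x₂ ∈ A, ∀ x₃ ∈ A, x₁ < x₂ → x₂ < x₃ →
          f x₂ ≤ f x₁ + (f x₃ - f x₁) * (x₂ - x₁) / (x₃ - x₁) := by
  have hβ : (0:ℝ) < α - 1 := by linarith
  have h01 : (0:ℝ) ≤ 1 := zero_le_one
  have h0m : (0:ℝ) ∈ Icc (0:ℝ) 1 := ⟨le_refl 0, zero_le_one⟩
  have h1m : (1:ℝ) ∈ Icc (0:ℝ) 1 := ⟨zero_le_one, le_refl 1⟩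
  have hL : 0 ≤ L := by
    have h := hHolder 0 h0m 1 h1m
    have : |(0:ℝ) - 1| ^ (α - 1) = 1 := by
      norm_num
    rw [this] at h
    have := abs_nonneg (f' 0 - f' 1)
    linarith
  have hcont : ContinuousOn f (Icc (0:ℝ) 1) := fun x hx => (hderiv x hx).continuousWithinAt
  have huv01 : Icc u v ⊆ Icc (0:ℝ) 1 := Icc_subset_Icc hu.1 hv.2
  -- Hölder structure of f'
  have hr0 : 0 < (α - 1).toNNReal := Real.toNNReal_pos.2 hβ
  have hHolderOn : HolderOnWith L.toNNReal (α - 1).toNNReal f' (Icc (0:ℝ) 1) := by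
    intro x hx y hy
    rw [edist_dist, edist_dist, Real.dist_eq, Real.dist_eq]
    have hcoer : ((α - 1).toNNReal : ℝ) = α - 1 := Real.coe_toNNReal _ hβ.le
    have hcoeL : (L.toNNReal : ℝ≥0∞) = ENNReal.ofReal L := rfl
    rw [hcoer, hcoeL, ENNReal.ofReal_rpow_of_nonneg (abs_nonneg _) hβ.le,
      ← ENNReal.ofReal_mul hL]
    exact ENNReal.ofReal_le_ofReal (hHolder x hx y hy)
  have hf'cont : ContinuousOn f' (Icc (0:ℝ) 1) := hHolderOn.continuousOn hr0
  -- bound on f'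
  set M := |f' 0| + L with hM_def
  have hM : ∀ t ∈ Icc (0:ℝ) 1, |f' t| ≤ M := by
    intro t ht
    have h1 : |f' t - f' 0| ≤ L * |t - 0| ^ (α - 1) := hHolder t ht 0 h0m
    have h2 : |t - 0| ^ (α - 1) ≤ 1 := by
      rw [sub_zero]
      apply Real.rpow_le_one (abs_nonneg _) _ hβ.le
      rw [abs_of_nonneg ht.1]; exact ht.2
    have h3 : L * |t - 0| ^ (α - 1) ≤ L * 1 := mul_le_mul_of_nonneg_left h2 hL
    have h4 : |f' t| ≤ |f' 0| + |f' t - f' 0| := by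
      have := abs_add_le (f' 0) (f' t - f' 0)
      simpa using this
    simp only [hM_def]
    linarith
  -- the compact parameter space and the touching set S
  set K : Set (ℝ × ℝ) := Icc u v ×ˢ Icc (-M) M with hK_def
  have hKcomp : IsCompact K := isCompact_Icc.prod isCompact_Icc
  have hKclosed : IsClosed K := isClosed_Icc.prod isClosed_Icc
  set S : Set (ℝ × ℝ) :=
    ⋂ t ∈ Icc u v, (K ∩ (fun p : ℝ × ℝ => f p.1 - p.2 * p.1 - (f t - p.2 * t)) ⁻¹' Iic 0)
    with hS_def
  have hGcont : ∀ t : ℝ, ContinuousOn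
      (fun p : ℝ × ℝ => f p.1 - p.2 * p.1 - (f t - p.2 * t)) K := by
    intro t
    apply ContinuousOn.sub
    · apply ContinuousOn.sub
      · apply hcont.comp continuous_fst.continuousOn
        intro p hp
        exact huv01 hp.1
      · exact (continuous_snd.mul continuous_fst).continuousOn
    · exact (continuous_const.sub (continuous_snd.mul continuous_const)).continuousOn
  have hSclosed : IsClosed S := by
    apply isClosed_biInter
    intro t ht
    exact (hGcont t).preimage_isClosed_of_isClosed hKclosed isClosed_Iic
  have hSsubK : S ⊆ K := by
    intro p hp
    have := mem_iInter₂.1 hp u (left_mem_Icc.2 huv.le)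
    exact this.1
  have hScomp : IsCompact S := hKcomp.of_isClosed_subset hSclosed hSsubK
  -- the set A
  set A : Set ℝ := Prod.fst '' S with hA_def
  have hAcomp : IsCompact A := hScomp.image continuous_fst
  have hAclosed : IsClosed A := hAcomp.isClosed
  have hAsubuv : A ⊆ Icc u v := by
    rintro _ ⟨p, hp, rfl⟩
    exact (hSsubK hp).1
  have hAsub01 : A ⊆ Icc (0:ℝ) 1 := fun x hx => huv01 (hAsubuv hx)
  -- membership in S characterization
  have hSmem : ∀ p : ℝ × ℝ, p ∈ S ↔ p ∈ K ∧ ∀ t ∈ Icc u v,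
      f p.1 - p.2 * p.1 ≤ f t - p.2 * t := by
    intro p
    constructor
    · intro hp
      refine ⟨hSsubK hp, fun t ht => ?_⟩
      have := mem_iInter₂.1 hp t ht
      have h2 := this.2
      simp only [mem_preimage, mem_Iic] at h2
      linarith
    · rintro ⟨hpK, hp⟩
      apply mem_iInter₂.2
      intro t ht
      refine ⟨hpK, ?_⟩
      simp only [mem_preimage, mem_Iic]
      have := hp t ht
      linarith
  -- every slope in (f' u, f' v) is attained on A
  have hattain : Ioo (f' u) (f' v) ⊆ f' '' A := by
    rintro a ⟨hau, hav⟩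
    set g : ℝ → ℝ := fun t => f t - a * t with hg_def
    have hgderivAt : ∀ t ∈ Ioo (0:ℝ) 1, HasDerivAt g (f' t - a) t := by
      intro t ht
      have h1 : HasDerivAt f (f' t) t :=
        (hderiv t (Ioo_subset_Icc_self ht)).hasDerivAt (Icc_mem_nhds ht.1 ht.2)
      have h2 : HasDerivAt (fun x : ℝ => a * x) a t := by
        simpa using (hasDerivAt_id t).const_mul a
      exact h1.sub h2
    have hgcont : ContinuousOn g (Icc u v) := by
      apply ContinuousOn.sub (hcont.mono huv01)
      exact (continuous_const.mul continuous_id).continuousOn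
    obtain ⟨x, hxmem, hxmin⟩ :=
      isCompact_Icc.exists_isMinOn (nonempty_Icc.2 huv.le) hgcont
    -- find w near u with g w < g u
    have hmidv : (u + v) / 2 < v := by linarith
    have humid : u < (u + v) / 2 := by linarith
    have hstepu : ∃ w, u < w ∧ w < v ∧ g w < g u := by
      have hcu : ContinuousWithinAt f' (Icc (0:ℝ) 1) u := hf'cont u hu
      have hev : f' ⁻¹' Iio a ∈ nhdsWithin u (Icc (0:ℝ) 1) := hcu (Iio_mem_nhds hau)
      rw [Metric.mem_nhdsWithin_iff] at hev
      obtain ⟨ε, hε, hball⟩ := hev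
      set w := min (u + ε / 2) ((u + v) / 2) with hw_def
      have huw : u < w := lt_min (by linarith) humid
      have hwv : w < v := lt_of_le_of_lt (min_le_right _ _) hmidv
      have hsmall : ∀ t ∈ Icc u w, f' t < a := by
        intro t ht
        have ht01 : t ∈ Icc (0:ℝ) 1 := huv01 ⟨ht.1, le_trans ht.2 hwv.le⟩
        have htb : t ∈ Metric.ball u ε := by
          rw [Metric.mem_ball, Real.dist_eq, abs_of_nonneg (by linarith [ht.1] : (0:ℝ) ≤ t - u)]
          have : w ≤ u + ε / 2 := min_le_left _ _
          linarith [ht.2]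
        have := hball ⟨htb, ht01⟩
        simpa using this
      have hgcw : ContinuousOn g (Icc u w) := hgcont.mono (Icc_subset_Icc_right hwv.le)
      have hder : ∀ t ∈ Ioo u w, HasDerivAt g (f' t - a) t := by
        intro t ht
        apply hgderivAt
        constructor
        · linarith [hu.1, ht.1]
        · linarith [hv.2, ht.2, hwv]
      obtain ⟨c, hc, hceq⟩ := exists_hasDerivAt_eq_slope g (fun t => f' t - a) huw hgcw hder
      have hcneg : f' c - a < 0 := by
        have := hsmall c ⟨hc.1.le, hc.2.le⟩
        linarith
      refine ⟨w, huw, hwv, ?_⟩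
      have hwu : (0:ℝ) < w - u := by linarith
      rw [hceq] at hcneg
      have := (div_neg_iff.1 hcneg)
      rcases this with ⟨h1, h2⟩ | ⟨h1, h2⟩
      · linarith
      · linarith
    -- find w' near v with g w' < g v
    have hstepv : ∃ w, u < w ∧ w < v ∧ g w < g v := by
      have hcv : ContinuousWithinAt f' (Icc (0:ℝ) 1) v := hf'cont v hv
      have hev : f' ⁻¹' Ioi a ∈ nhdsWithin v (Icc (0:ℝ) 1) := hcv (Ioi_mem_nhds hav)
      rw [Metric.mem_nhdsWithin_iff] at hev
      obtain ⟨ε, hε, hball⟩ := hev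
      set w := max (v - ε / 2) ((u + v) / 2) with hw_def
      have huw : u < w := lt_of_lt_of_le humid (le_max_right _ _)
      have hwv : w < v := max_lt (by linarith) hmidv
      have hbig : ∀ t ∈ Icc w v, a < f' t := by
        intro t ht
        have ht01 : t ∈ Icc (0:ℝ) 1 := huv01 ⟨le_trans huw.le ht.1, ht.2⟩
        have htb : t ∈ Metric.ball v ε := by
          rw [Metric.mem_ball, Real.dist_eq, abs_of_nonpos (by linarith [ht.2] : t - v ≤ 0)]
          have : v - ε / 2 ≤ w := le_max_left _ _
          linarith [ht.1]
        have := hball ⟨htb, ht01⟩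
        simpa using this
      have hgcw : ContinuousOn g (Icc w v) := hgcont.mono (Icc_subset_Icc_left huw.le)
      have hder : ∀ t ∈ Ioo w v, HasDerivAt g (f' t - a) t := by
        intro t ht
        apply hgderivAt
        constructor
        · linarith [hu.1, ht.1, huw]
        · linarith [hv.2, ht.2]
      obtain ⟨c, hc, hceq⟩ := exists_hasDerivAt_eq_slope g (fun t => f' t - a) hwv hgcw hder
      have hcpos : 0 < f' c - a := by
        have := hbig c ⟨hc.1.le, hc.2.le⟩
        linarith
      refine ⟨w, huw, hwv, ?_⟩
      rw [hceq] at hcpos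
      have hwv' : (0:ℝ) < v - w := by linarith
      have := (div_pos_iff.1 hcpos)
      rcases this with ⟨h1, h2⟩ | ⟨h1, h2⟩
      · linarith
      · linarith
    obtain ⟨w1, hw1u, hw1v, hgw1⟩ := hstepu
    obtain ⟨w2, hw2u, hw2v, hgw2⟩ := hstepv
    -- the min is interior
    have hxu : x ≠ u := by
      intro h
      have := hxmin ⟨hw1u.le, hw1v.le⟩
      rw [h] at this
      simp only [hg_def, mem_setOf_eq] at this hgw1
      linarith [this]
    have hxv : x ≠ v := by
      intro h
      have := hxmin ⟨hw2u.le, hw2v.le⟩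
      rw [h] at this
      simp only [hg_def, mem_setOf_eq] at this hgw2
      linarith [this]
    have hxuv : x ∈ Ioo u v := ⟨lt_of_le_of_ne hxmem.1 (Ne.symm hxu), lt_of_le_of_ne hxmem.2 hxv⟩
    have hx01 : x ∈ Ioo (0:ℝ) 1 := ⟨lt_of_le_of_lt hu.1 hxuv.1, lt_of_lt_of_le hxuv.2 hv.2⟩
    -- derivative vanishes at interior min
    have hlocmin : IsLocalMin g x := hxmin.isLocalMin (Icc_mem_nhds hxuv.1 hxuv.2)
    have hfx : f' x - a = 0 := hlocmin.hasDerivAt_eq_zero (hgderivAt x hx01)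
    have hfxa : f' x = a := by linarith
    -- build the element of A
    have hMa : a ∈ Icc (-M) M := by
      constructor
      · have := hM u (huv01 (left_mem_Icc.2 huv.le))
        have := (abs_le.1 (hM u hu)).1
        linarith
      · have := (abs_le.1 (hM v hv)).2
        linarith
    have hxS : (x, a) ∈ S := by
      rw [hSmem]
      refine ⟨⟨hxmem, hMa⟩, fun t ht => ?_⟩
      exact hxmin ht
    exact ⟨x, ⟨(x, a), hxS, rfl⟩, hfxa⟩
  -- dimension bound
  have hdim : ENNReal.ofReal (α - 1) ≤ dimH A := by
    have himg : dimH (f' '' A) ≤ dimH A / ((α - 1).toNNReal : ℝ≥0∞) :=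
      (hHolderOn.mono hAsub01).dimH_image_le hr0
    have hIoo : dimH (Ioo (f' u) (f' v)) = 1 := by
      have hmem : Ioo (f' u) (f' v) ∈ nhds ((f' u + f' v) / 2) := by
        apply isOpen_Ioo.mem_nhds
        constructor <;> [linarith; linarith]
      rw [Real.dimH_of_mem_nhds hmem]
      simp
    have h1le : (1 : ℝ≥0∞) ≤ dimH (f' '' A) := by
      rw [← hIoo]
      exact dimH_mono hattain
    have h1le' : (1 : ℝ≥0∞) ≤ dimH A / ((α - 1).toNNReal : ℝ≥0∞) := le_trans h1le himg
    have hne0 : ((α - 1).toNNReal : ℝ≥0∞) ≠ 0 := by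
      simp only [ne_eq, ENNReal.coe_eq_zero]
      exact hr0.ne'
    have hnetop : ((α - 1).toNNReal : ℝ≥0∞) ≠ ⊤ := ENNReal.coe_ne_top
    have := (ENNReal.le_div_iff_mul_le (Or.inl hne0) (Or.inl hnetop)).1 h1le'
    rw [one_mul] at this
    calc ENNReal.ofReal (α - 1) = ((α - 1).toNNReal : ℝ≥0∞) := rfl
      _ ≤ dimH A := this
  -- convexity
  refine ⟨A, hAsub01, hAclosed, hdim, ?_⟩
  intro x₁ hx₁ x₂ hx₂ x₃ hx₃ h12 h23
  obtain ⟨p, hpS, hp1⟩ := hx₂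
  obtain ⟨hpK, hpmin⟩ := (hSmem p).1 hpS
  set a := p.2 with ha_def
  have hmin1 : f x₂ - a * x₂ ≤ f x₁ - a * x₁ := by
    have := hpmin x₁ (hAsubuv hx₁)
    rw [hp1] at this; exact this
  have hmin3 : f x₂ - a * x₂ ≤ f x₃ - a * x₃ := by
    have := hpmin x₃ (hAsubuv hx₃)
    rw [hp1] at this; exact this
  have h13 : (0:ℝ) < x₃ - x₁ := by linarith
  refine le_of_mul_le_mul_right ?_ h13
  rw [add_mul, div_mul_cancel₀ _ h13.ne']
  nlinarith [mul_le_mul_of_nonneg_right hmin1 (by linarith : (0:ℝ) ≤ x₃ - x₂),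
    mul_le_mul_of_nonneg_right hmin3 (by linarith : (0:ℝ) ≤ x₂ - x₁)]

theorem holder_convex_or_concave_restriction (α L : ℝ) (hα1 : 1 < α) (hα2 : α ≤ 2)
    (f f' : ℝ → ℝ)
    (hderiv : ∀ x ∈ Icc (0:ℝ) 1, HasDerivWithinAt f (f' x) (Icc 0 1) x)
    (hHolder : ∀ x ∈ Icc (0:ℝ) 1, ∀ y ∈ Icc (0:ℝ) 1,
      |f' x - f' y| ≤ L * |x - y| ^ (α - 1)) :
    ∃ A ⊆ Icc (0:ℝ) 1, IsClosed A ∧ ENNReal.ofReal (α - 1) ≤ dimH A ∧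
      ((∀ x₁ ∈ A, ∀ x₂ ∈ A, ∀ x₃ ∈ A, x₁ < x₂ → x₂ < x₃ →
          f x₂ ≤ f x₁ + (f x₃ - f x₁) * (x₂ - x₁) / (x₃ - x₁)) ∨
       (∀ x₁ ∈ A, ∀ x₂ ∈ A, ∀ x₃ ∈ A, x₁ < x₂ → x₂ < x₃ →
          f x₁ + (f x₃ - f x₁) * (x₂ - x₁) / (x₃ - x₁) ≤ f x₂)) := by
  by_cases h1 : ∃ u ∈ Icc (0:ℝ) 1, ∃ v ∈ Icc (0:ℝ) 1, u < v ∧ f' u < f' v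
  · obtain ⟨u, hu, v, hv, huv, hfuv⟩ := h1
    obtain ⟨A, hA01, hAc, hAd, hAconv⟩ :=
      holder_aux_min α L hα1 f f' hderiv hHolder u v hu hv huv hfuv
    exact ⟨A, hA01, hAc, hAd, Or.inl hAconv⟩
  by_cases h2 : ∃ u ∈ Icc (0:ℝ) 1, ∃ v ∈ Icc (0:ℝ) 1, u < v ∧ f' v < f' u
  · obtain ⟨u, hu, v, hv, huv, hfuv⟩ := h2
    have hderiv' : ∀ x ∈ Icc (0:ℝ) 1, HasDerivWithinAt (fun t => -f t) (-f' x) (Icc 0 1) x :=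
      fun x hx => (hderiv x hx).neg
    have hHolder' : ∀ x ∈ Icc (0:ℝ) 1, ∀ y ∈ Icc (0:ℝ) 1,
        |(-f' x) - (-f' y)| ≤ L * |x - y| ^ (α - 1) := by
      intro x hx y hy
      have : -f' x - -f' y = -(f' x - f' y) := by ring
      rw [this, abs_neg]
      exact hHolder x hx y hy
    obtain ⟨A, hA01, hAc, hAd, hAconv⟩ :=
      holder_aux_min α L hα1 (fun t => -f t) (fun t => -f' t) hderiv' hHolder' u v hu hv huv
        (by simpa using hfuv)
    refine ⟨A, hA01, hAc, hAd, Or.inr ?_⟩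
    intro x₁ hx₁ x₂ hx₂ x₃ hx₃ h12 h23
    have h := hAconv x₁ hx₁ x₂ hx₂ x₃ hx₃ h12 h23
    have e : (-f x₃ - -f x₁) * (x₂ - x₁) / (x₃ - x₁)
        = -((f x₃ - f x₁) * (x₂ - x₁) / (x₃ - x₁)) := by ring
    rw [e] at h
    linarith
  -- degenerate case: f' is constant on [0,1]
  · push_neg at h1 h2
    have hconst : ∀ x ∈ Icc (0:ℝ) 1, f' x = f' 0 := by
      intro x hx
      have h0 : (0:ℝ) ∈ Icc (0:ℝ) 1 := ⟨le_refl 0, zero_le_one⟩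
      rcases lt_trichotomy x 0 with h | h | h
      · exact absurd h (not_lt.2 hx.1)
      · rw [h]
      · have ha := h1 0 h0 x hx h
        have hb := h2 0 h0 x hx h
        linarith
    set c := f' 0 with hc_def
    have hcont : ContinuousOn f (Icc (0:ℝ) 1) := fun x hx => (hderiv x hx).continuousWithinAt
    have hgcont : ContinuousOn (fun t => f t - c * t) (Icc (0:ℝ) 1) :=
      hcont.sub (continuous_const.mul continuous_id).continuousOn
    have hgder : ∀ x ∈ Ico (0:ℝ) 1, HasDerivWithinAt (fun t => f t - c * t) 0 (Ici x) x := by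
      intro x hx
      have hx01 : x ∈ Icc (0:ℝ) 1 := ⟨hx.1, hx.2.le⟩
      have h2' : HasDerivWithinAt (fun t : ℝ => c * t) c (Icc (0:ℝ) 1) x := by
        simpa using ((hasDerivAt_id x).const_mul c).hasDerivWithinAt
      have hg : HasDerivWithinAt (fun t => f t - c * t) (f' x - c) (Icc (0:ℝ) 1) x :=
        (hderiv x hx01).sub h2'
      have hzero : f' x - c = 0 := by rw [hconst x hx01]; ring
      rw [hzero] at hg
      apply hg.mono_of_mem_nhdsWithin
      have hmem : Ici x ∩ Iio 1 ∈ nhdsWithin x (Ici x) :=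
        inter_mem_nhdsWithin _ (Iio_mem_nhds hx.2)
      apply Filter.mem_of_superset hmem
      intro t ht
      exact ⟨le_trans hx.1 ht.1, ht.2.le⟩
    have key : ∀ x ∈ Icc (0:ℝ) 1, f x - c * x = f 0 - c * 0 :=
      constant_of_has_deriv_right_zero hgcont hgder
    have keyf : ∀ x ∈ Icc (0:ℝ) 1, f x = f 0 + c * x := by
      intro x hx
      have := key x hx
      have h0 : f 0 - c * 0 = f 0 := by ring
      rw [h0] at this
      linarith
    refine ⟨Icc 0 1, subset_rfl, isClosed_Icc, ?_, Or.inl ?_⟩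
    · have hmem : Icc (0:ℝ) 1 ∈ nhds (1/2 : ℝ) := by
        apply Icc_mem_nhds <;> norm_num
      rw [Real.dimH_of_mem_nhds hmem]
      simp only [Module.finrank_self, Nat.cast_one]
      exact ENNReal.ofReal_le_one.2 (by linarith)
    · intro x₁ hx₁ x₂ hx₂ x₃ hx₃ h12 h23
      rw [keyf x₁ hx₁, keyf x₂ hx₂, keyf x₃ hx₃]
      have h13 : x₃ - x₁ ≠ 0 := by intro h; linarith [h12, h23]; 
      have e : (f 0 + c * x₃ - (f 0 + c * x₁)) * (x₂ - x₁) / (x₃ - x₁) = c * (x₂ - x₁) := by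
        field_simp
        ring
      rw [e]
      linarith
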